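/- Let p, q, r be positive integers and let f : M_{p×r} → M_{p×r}, g : M_{p×q} → M_{p×q}, h : M_{q×r} → M_{q×r} be F-linear maps such that f(A·B) = g(A)·B + A·h(B) for all A ∈ M_{p×q} and B ∈ M_{q×r}. Then there exist matrices X ∈ M_{p×p}, Y ∈ M_{r×r}, Z ∈ M_{q×q} such that f(C) = X·C + C·Y for all C ∈ M_{p×r}, g(A) = X·A + A·Z for all A ∈ M_{p×q}, and h(B) = B·Y − Z·B for all B ∈ M_{q×r}. -/

import Mathlib

open Matrix

/-- If linear maps `f : M_{p×r} → M_{p×r}`, `g : M_{p×q} → M_{p×q}`,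
`h : M_{q×r} → M_{q×r}` satisfy `f(A·B) = g(A)·B + A·h(B)` for all `A ∈ M_{p×q}`,
`B ∈ M_{q×r}`, then there exist `X ∈ M_{p×p}`, `Y ∈ M_{r×r}`, `Z ∈ M_{q×q}` with
`f(C) = X·C + C·Y`, `g(A) = X·A + A·Z`, `h(B) = B·Y − Z·B`. -/
theorem stmt3 {F : Type*} [Field F] (p q r : ℕ)
    (hp : 0 < p) (hq : 0 < q) (hr : 0 < r)
    (f : Matrix (Fin p) (Fin r) F →ₗ[F] Matrix (Fin p) (Fin r) F)
    (g : Matrix (Fin p) (Fin q) F →ₗ[F] Matrix (Fin p) (Fin q) F)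
    (h : Matrix (Fin q) (Fin r) F →ₗ[F] Matrix (Fin q) (Fin r) F)
    (hrel : ∀ (A : Matrix (Fin p) (Fin q) F) (B : Matrix (Fin q) (Fin r) F),
      f (A * B) = g A * B + A * h B) :
    ∃ (X : Matrix (Fin p) (Fin p) F) (Y : Matrix (Fin r) (Fin r) F)
      (Z : Matrix (Fin q) (Fin q) F),
      (∀ C : Matrix (Fin p) (Fin r) F, f C = X * C + C * Y) ∧
      (∀ A : Matrix (Fin p) (Fin q) F, g A = X * A + A * Z) ∧
      (∀ B : Matrix (Fin q) (Fin r) F, h B = B * Y - Z * B) := by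
  classical
  set op : Fin p := ⟨0, hp⟩
  set oq : Fin q := ⟨0, hq⟩
  set og : Fin r := ⟨0, hr⟩
  -- the key scalar identity
  have key : ∀ (i : Fin p) (k k' : Fin q) (j : Fin r) (m : Fin p) (n : Fin r),
      (if k = k' then f (Matrix.single i j 1) m n else 0) =
        (if j = n then g (Matrix.single i k 1) m k' else 0) +
        (if i = m then h (Matrix.single k' j 1) k n else 0) := by
    intro i k k' j m n
    have H := congrFun (congrFun (hrel (Matrix.single i k 1) (Matrix.single k' j 1)) m) n
    have h1 : ((g (Matrix.single i k 1) : Matrix (Fin p) (Fin q) F) * Matrix.single k' j (1:F)) m n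
        = if j = n then g (Matrix.single i k 1) m k' else 0 := by
      simp [Matrix.mul_apply, Matrix.single, ite_and]
    have h2 : ((Matrix.single i k (1:F)) * (h (Matrix.single k' j 1) : Matrix (Fin q) (Fin r) F)) m n
        = if i = m then h (Matrix.single k' j 1) k n else 0 := by
      simp [Matrix.mul_apply, Matrix.single, ite_and]
    rw [Matrix.add_apply, h1, h2] at H
    have hprod : (Matrix.single i k (1:F)) * (Matrix.single k' j (1:F))
        = if k = k' then Matrix.single i j (1:F) else 0 := by
      by_cases hkk : k = k'
      · subst hkk
        rw [if_pos rfl]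
        ext a b
        simp only [Matrix.mul_apply, Matrix.single, Matrix.of_apply, ite_and, ite_mul, one_mul,
          zero_mul, Finset.sum_ite_eq, Finset.mem_univ, if_true]
        split_ifs <;> simp
      · rw [if_neg hkk]
        ext a b
        simp only [Matrix.mul_apply, Matrix.single, Matrix.of_apply, ite_and, Matrix.zero_apply,
          ite_mul, one_mul, zero_mul]
        refine Finset.sum_eq_zero (fun x _ => ?_)
        clear H h1 h2
        split_ifs <;> simp_all
    rw [hprod] at H
    by_cases hkk : k = k'
    · rw [if_pos hkk] at H ⊢
      rw [← H]
    · rw [if_neg hkk] at H ⊢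
      rw [map_zero, Matrix.zero_apply] at H
      rw [← H]
  -- definitions
  set X : Matrix (Fin p) (Fin p) F :=
    Matrix.of (fun m i => g (Matrix.single i oq 1) m oq) with hX
  set Y : Matrix (Fin r) (Fin r) F :=
    Matrix.of (fun j n => h (Matrix.single oq j 1) oq n) with hY
  set Z : Matrix (Fin q) (Fin q) F :=
    Matrix.of (fun k l =>
      (if k = l then h (Matrix.single oq og 1) oq og else 0)
        - h (Matrix.single l og 1) k og) with hZ
  -- g on basis matrices, entrywise
  have hg : ∀ (i : Fin p) (k : Fin q) (m : Fin p) (k' : Fin q),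
      g (Matrix.single i k 1) m k'
        = (if k = k' then X m i else 0) + (if i = m then Z k k' else 0) := by
    intro i k m k'
    by_cases hkk : k = k'
    · subst hkk
      have K1 := key i k k og m og
      have K2 := key i oq oq og m og
      rw [if_pos rfl, if_pos rfl] at K1
      rw [if_pos rfl, if_pos rfl] at K2
      simp only [hX, hZ, Matrix.of_apply, if_pos rfl, if_true, eq_self_iff_true]
      by_cases him : i = m
      · rw [if_pos him] at K1 K2 ⊢
        linear_combination K2 - K1
      · rw [if_neg him] at K1 K2 ⊢
        linear_combination K2 - K1
    · have K := key i k k' og m og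
      rw [if_neg hkk, if_pos rfl] at K
      simp only [hX, hZ, Matrix.of_apply, if_neg hkk]
      by_cases him : i = m
      · rw [if_pos him] at K ⊢
        linear_combination -K
      · rw [if_neg him] at K ⊢
        linear_combination -K
  -- h on basis matrices, entrywise
  have hh : ∀ (k : Fin q) (j : Fin r) (l : Fin q) (n : Fin r),
      h (Matrix.single k j 1) l n
        = (if k = l then Y j n else 0) - (if j = n then Z l k else 0) := by
    intro k j l n
    have K := key op l k j op n
    rw [if_pos rfl] at K
    have K2 := key op oq oq j op n
    rw [if_pos rfl, if_pos rfl] at K2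
    have hgv := hg op l op k
    simp only [hX, hY, hZ, Matrix.of_apply, eq_self_iff_true, if_true] at hgv K K2 ⊢
    by_cases hlk : l = k
    · subst hlk
      simp only [eq_self_iff_true, if_true] at K hgv ⊢
      by_cases hjn : j = n
      · simp only [if_pos hjn] at K K2 ⊢
        linear_combination K2 - K - hgv
      · simp only [if_neg hjn] at K K2 ⊢
        linear_combination K2 - K
    · have hkl : ¬ (k = l) := fun e => hlk e.symm
      simp only [if_neg hlk, if_neg hkl] at K hgv ⊢
      by_cases hjn : j = n
      · simp only [if_pos hjn] at K K2 ⊢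
        linear_combination -K - hgv
      · simp only [if_neg hjn] at K K2 ⊢
        linear_combination -K
  -- f on basis matrices, entrywise
  have hf : ∀ (i : Fin p) (j : Fin r) (m : Fin p) (n : Fin r),
      f (Matrix.single i j 1) m n
        = (if j = n then X m i else 0) + (if i = m then Y j n else 0) := by
    intro i j m n
    have K := key i oq oq j m n
    rw [if_pos rfl] at K
    simp only [hX, hY, Matrix.of_apply]
    exact K
  -- matrix-level statements on basis matrices
  have hgM : ∀ (i : Fin p) (k : Fin q),
      g (Matrix.single i k 1) = X * (Matrix.single i k 1 : Matrix (Fin p) (Fin q) F) + (Matrix.single i k 1 : Matrix (Fin p) (Fin q) F) * Z := by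
    intro i k
    ext m k'
    rw [Matrix.add_apply, hg i k m k']
    congr 1
    · simp [Matrix.mul_apply, Matrix.single, ite_and]
    · simp [Matrix.mul_apply, Matrix.single, ite_and]
  have hhM : ∀ (k : Fin q) (j : Fin r),
      h (Matrix.single k j 1) = (Matrix.single k j 1 : Matrix (Fin q) (Fin r) F) * Y - Z * (Matrix.single k j 1 : Matrix (Fin q) (Fin r) F) := by
    intro k j
    ext l n
    rw [Matrix.sub_apply, hh k j l n]
    congr 1
    · simp [Matrix.mul_apply, Matrix.single, ite_and]
    · simp [Matrix.mul_apply, Matrix.single, ite_and]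
  have hfM : ∀ (i : Fin p) (j : Fin r),
      f (Matrix.single i j 1) = X * (Matrix.single i j 1 : Matrix (Fin p) (Fin r) F) + (Matrix.single i j 1 : Matrix (Fin p) (Fin r) F) * Y := by
    intro i j
    ext m n
    rw [Matrix.add_apply, hf i j m n]
    congr 1
    · simp [Matrix.mul_apply, Matrix.single, ite_and]
    · simp [Matrix.mul_apply, Matrix.single, ite_and]
  -- extend by linearity
  have expand : ∀ {a b : ℕ} (M : Matrix (Fin a) (Fin b) F),
      M = ∑ i, ∑ j, M i j • Matrix.single i j (1:F) := by
    intro a b M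
    conv_lhs => rw [Matrix.matrix_eq_sum_single M]
    simp [Matrix.smul_single]
  refine ⟨X, Y, Z, ?_, ?_, ?_⟩
  · intro C
    conv_lhs => rw [expand C]
    conv_rhs => rw [expand C]
    simp only [map_sum, _root_.map_smul, hfM, Matrix.mul_sum, Matrix.sum_mul, Matrix.mul_smul,
      Matrix.smul_mul, smul_add, Finset.sum_add_distrib]
  · intro A
    conv_lhs => rw [expand A]
    conv_rhs => rw [expand A]
    simp only [map_sum, _root_.map_smul, hgM, Matrix.mul_sum, Matrix.sum_mul, Matrix.mul_smul,
      Matrix.smul_mul, smul_add, Finset.sum_add_distrib]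
  · intro B
    conv_lhs => rw [expand B]
    conv_rhs => rw [expand B]
    simp only [map_sum, _root_.map_smul, hhM, Matrix.mul_sum, Matrix.sum_mul, Matrix.mul_smul,
      Matrix.smul_mul, smul_sub, Finset.sum_sub_distrib]
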